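/- arXiv:1807.11538 — 2 statements merged into one kernel-verified Lean document; each statement's English description precedes it below -/
import Mathlib

section
/- Let A be an m×n matrix with nonnegative entries and x ∈ ℝ_{≥0}^n, let δ ∈ (0,1), set α = (1 + δ + δ²/2)/(1 − δ), and let z be the randomized rounding of x at scale α. Fix i ∈ [m] and let θ ∈ (0,1] satisfy ∑_{j : A_{i,j} ≤ θ} A_{i,j} x_j ≥ 1 − δ. Then P[(Az)_i < 1] ≤ exp(−δ²/(2θ)). -/
open MeasureTheory ProbabilityTheory

/-- concentration bound in the small-Δ₁ regime
(Lemma `small-columnsum-concentration`). -/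
theorem stmt_18 (m n : ℕ) (A : Fin m → Fin n → ℝ) (x : Fin n → ℝ) (δ α : ℝ)
    (Ω : Type*) [MeasurableSpace Ω] (P : Measure Ω) [IsProbabilityMeasure P]
    (Y : Fin n → Ω → ℕ) (z : Ω → Fin n → ℕ)
    (hA : ∀ i j, 0 ≤ A i j)
    (hx : ∀ j, 0 ≤ x j)
    (hδ : δ ∈ Set.Ioo (0 : ℝ) 1)
    (hα : α = (1 + δ + δ ^ 2 / 2) / (1 - δ))
    (hYmeas : ∀ j, Measurable (Y j))
    (hY01 : ∀ j ω, Y j ω ≤ 1)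
    (hYind : iIndepFun Y P)
    (hYber : ∀ j, P {ω | Y j ω = 1} = ENNReal.ofReal (α * x j - (⌊α * x j⌋₊ : ℝ)))
    (hz : ∀ ω j, z ω j = ⌊α * x j⌋₊ + Y j ω)
    (i : Fin m) (θ : ℝ) (hθ : θ ∈ Set.Ioc (0 : ℝ) 1)
    (hsmall : 1 - δ ≤ ∑ j ∈ Finset.univ.filter (fun j => A i j ≤ θ), A i j * x j) :
    P {ω | ∑ j, A i j * (z ω j : ℝ) < 1} ≤
      ENNReal.ofReal (Real.exp (-δ ^ 2 / (2 * θ))) := by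
  obtain ⟨hδ0, hδ1⟩ := hδ
  obtain ⟨hθ0, hθ1⟩ := hθ
  set μ₀ : ℝ := 1 + δ + δ ^ 2 / 2 with hμ₀def
  have hμ₀1 : 1 < μ₀ := by rw [hμ₀def]; nlinarith
  have hμ₀0 : 0 < μ₀ := by linarith
  have hαμ : α * (1 - δ) = μ₀ := by
    rw [hα, div_mul_cancel₀ _ (by linarith : (1 : ℝ) - δ ≠ 0)]
  have hα0 : 0 < α := by
    rw [hα]; apply div_pos <;> nlinarith
  set t : ℝ := -Real.log μ₀ / θ with htdef
  have hlog0 : 0 < Real.log μ₀ := Real.log_pos hμ₀1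
  have ht0 : t < 0 := div_neg_of_neg_of_pos (neg_neg_of_pos hlog0) hθ0
  set c : ℝ := (Real.exp (t * θ) - 1) / θ with hcdef
  have htθ : t * θ = -Real.log μ₀ := by
    rw [htdef]; field_simp
  have hexptθ : Real.exp (t * θ) = 1 / μ₀ := by
    rw [htθ, Real.exp_neg, Real.exp_log hμ₀0, one_div]
  have hc0 : c ≤ 0 := by
    apply div_nonpos_of_nonpos_of_nonneg _ hθ0.le
    rw [hexptθ]
    have : 1 / μ₀ < 1 := by rw [div_lt_one hμ₀0]; exact hμ₀1
    linarith
  set k : Fin n → ℝ := fun j => (⌊α * x j⌋₊ : ℝ) with hkdef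
  set p : Fin n → ℝ := fun j => α * x j - k j with hpdef
  have hax : ∀ j, 0 ≤ α * x j := fun j => mul_nonneg hα0.le (hx j)
  have hk0 : ∀ j, 0 ≤ k j := fun j => Nat.cast_nonneg _
  have hp0 : ∀ j, 0 ≤ p j := fun j => sub_nonneg.mpr (Nat.floor_le (hax j))
  set X : Fin n → Ω → ℝ := fun j ω => A i j * (k j + (Y j ω : ℝ)) with hXdef
  have hXmeas : ∀ j, Measurable (X j) := fun j =>
    ((measurable_from_top.comp (hYmeas j)).const_add (k j)).const_mul (A i j)
  have hXnonneg : ∀ j ω, 0 ≤ X j ω := fun j ω =>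
    mul_nonneg (hA i j) (by positivity)
  set S : Finset (Fin n) := Finset.univ.filter (fun j => A i j ≤ θ) with hSdef
  have hXind : iIndepFun X P :=
    hYind.comp (fun j (y : ℕ) => A i j * (k j + (y : ℝ))) (fun j => measurable_from_top)
  have hWmeas : Measurable (∑ j ∈ S, X j) := by
    have h : (∑ j ∈ S, X j) = fun ω => ∑ j ∈ S, X j ω := by
      funext ω; exact Finset.sum_apply _ _ _
    rw [h]
    exact Finset.measurable_sum S (fun j _ => hXmeas j)
  have hWnonneg : ∀ ω, 0 ≤ (∑ j ∈ S, X j) ω := by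
    intro ω
    rw [Finset.sum_apply]
    exact Finset.sum_nonneg fun j _ => hXnonneg j ω
  have h_int : Integrable (fun ω => Real.exp (t * (∑ j ∈ S, X j) ω)) P := by
    apply Integrable.mono' (integrable_const (1 : ℝ))
    · exact ((hWmeas.const_mul t).exp).aestronglyMeasurable
    · filter_upwards with ω
      rw [Real.norm_eq_abs, abs_of_pos (Real.exp_pos _), Real.exp_le_one_iff]
      exact mul_nonpos_of_nonpos_of_nonneg ht0.le (hWnonneg ω)
  -- inclusion of events
  have hsub : {ω | ∑ j, A i j * (z ω j : ℝ) < 1} ⊆ {ω | (∑ j ∈ S, X j) ω ≤ 1} := by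
    intro ω hω
    simp only [Set.mem_setOf_eq] at hω ⊢
    have h1 : ∀ j, A i j * ((z ω j : ℕ) : ℝ) = X j ω := by
      intro j
      rw [hz ω j, hXdef, hkdef]
      push_cast
      ring
    calc (∑ j ∈ S, X j) ω = ∑ j ∈ S, X j ω := Finset.sum_apply _ _ _
      _ ≤ ∑ j, X j ω :=
          Finset.sum_le_sum_of_subset_of_nonneg (Finset.filter_subset _ _)
            (fun j _ _ => hXnonneg j ω)
      _ = ∑ j, A i j * ((z ω j : ℕ) : ℝ) := by
          exact Finset.sum_congr rfl fun j _ => (h1 j).symm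
      _ ≤ 1 := hω.le
  -- exact mgf of each X j
  have hmgf_eq : ∀ j, mgf (X j) P t =
      Real.exp (t * (A i j * k j)) * (1 + (Real.exp (t * A i j) - 1) * p j) := by
    intro j
    have hsetmeas : MeasurableSet {ω | Y j ω = 1} := hYmeas j (measurableSet_singleton 1)
    have hptoReal : (P {ω | Y j ω = 1}).toReal = p j := by
      rw [hYber j, ENNReal.toReal_ofReal (hp0 j)]
    have hfun : ∀ ω, Real.exp (t * X j ω) =
        Real.exp (t * (A i j * k j)) *
          (1 + ({ω' | Y j ω' = 1}).indicator (fun _ => Real.exp (t * A i j) - 1) ω) := by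
      intro ω
      rcases Nat.le_one_iff_eq_zero_or_eq_one.mp (hY01 j ω) with h | h
      · have hnot : ω ∉ {ω' | Y j ω' = 1} := by simp [h]
        rw [Set.indicator_of_notMem hnot]
        show Real.exp (t * (A i j * (k j + ((Y j ω : ℕ) : ℝ)))) = _
        rw [h]
        norm_num
      · have hmem : ω ∈ {ω' | Y j ω' = 1} := h
        rw [Set.indicator_of_mem hmem]
        show Real.exp (t * (A i j * (k j + ((Y j ω : ℕ) : ℝ)))) = _
        rw [h]
        push_cast
        rw [show t * (A i j * (k j + 1)) = t * (A i j * k j) + t * A i j by ring,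
          Real.exp_add]
        ring
    have hmgf0 : mgf (X j) P t = ∫ ω, Real.exp (t * X j ω) ∂P := rfl
    rw [hmgf0, integral_congr_ae (Filter.Eventually.of_forall hfun), integral_const_mul]
    congr 1
    rw [integral_add (integrable_const 1) ((integrable_const _).indicator hsetmeas)]
    rw [integral_const, probReal_univ, one_smul,
      integral_indicator_const _ hsetmeas, measureReal_def, hptoReal, smul_eq_mul]
    ring
  -- bound on each mgf
  have hmgf_le : ∀ j ∈ S, mgf (X j) P t ≤ Real.exp (α * x j * (A i j * c)) := by
    intro j hjS
    have haθ : A i j ≤ θ := by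
      have := Finset.mem_filter.mp hjS
      exact this.2
    have ha0 : 0 ≤ A i j := hA i j
    have hi : t * A i j ≤ A i j * c := by
      have h1 : t * θ + 1 ≤ Real.exp (t * θ) := Real.add_one_le_exp _
      have htc : t ≤ c := by
        rw [hcdef, le_div_iff₀ hθ0]
        linarith
      calc t * A i j = A i j * t := mul_comm _ _
        _ ≤ A i j * c := mul_le_mul_of_nonneg_left htc ha0
    have hii : Real.exp (t * A i j) - 1 ≤ A i j * c := by
      rcases eq_or_lt_of_le ha0 with h0 | hapos
      · rw [← h0]
        simp
      · have hb0 : (0 : ℝ) ≤ A i j / θ := by positivity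
        have hb1 : A i j / θ ≤ 1 := (div_le_one hθ0).mpr haθ
        have hconv := convexOn_exp.2 (Set.mem_univ (t * θ)) (Set.mem_univ (0 : ℝ))
          hb0 (by linarith : (0 : ℝ) ≤ 1 - A i j / θ) (by ring)
        simp only [smul_eq_mul, mul_zero, add_zero, Real.exp_zero, mul_one] at hconv
        have hba : A i j / θ * (t * θ) = t * A i j := by
          field_simp
        rw [hba] at hconv
        have hACc : A i j * c = A i j / θ * (Real.exp (t * θ) - 1) := by
          rw [hcdef]
          field_simp
        rw [hACc]
        have : A i j / θ * (Real.exp (t * θ) - 1)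
            = A i j / θ * Real.exp (t * θ) + (1 - A i j / θ) - 1 := by ring
        linarith [hconv]
    have hkp : k j + p j = α * x j := by rw [hpdef]; ring
    have h1 : k j * (t * A i j) ≤ k j * (A i j * c) := mul_le_mul_of_nonneg_left hi (hk0 j)
    have h2 : p j * (Real.exp (t * A i j) - 1) ≤ p j * (A i j * c) :=
      mul_le_mul_of_nonneg_left hii (hp0 j)
    have hexp_arg : t * (A i j * k j) + (Real.exp (t * A i j) - 1) * p j
        ≤ α * x j * (A i j * c) := by
      rw [← hkp]
      nlinarith [h1, h2]
    calc mgf (X j) P t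
        = Real.exp (t * (A i j * k j)) * (1 + (Real.exp (t * A i j) - 1) * p j) := hmgf_eq j
      _ ≤ Real.exp (t * (A i j * k j)) * Real.exp ((Real.exp (t * A i j) - 1) * p j) := by
          apply mul_le_mul_of_nonneg_left _ (Real.exp_pos _).le
          have := Real.add_one_le_exp ((Real.exp (t * A i j) - 1) * p j)
          linarith
      _ = Real.exp (t * (A i j * k j) + (Real.exp (t * A i j) - 1) * p j) :=
          (Real.exp_add _ _).symm
      _ ≤ Real.exp (α * x j * (A i j * c)) := Real.exp_le_exp.mpr hexp_arg
  -- combine over S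
  have hmgf_sum := hXind.mgf_sum (t := t) hXmeas S
  have hprod : mgf (∑ j ∈ S, X j) P t ≤ Real.exp (∑ j ∈ S, α * x j * (A i j * c)) := by
    rw [hmgf_sum, Real.exp_sum]
    exact Finset.prod_le_prod (fun j _ => mgf_nonneg) hmgf_le
  have hsum_le : ∑ j ∈ S, α * x j * (A i j * c) ≤ μ₀ * c := by
    have heq : ∑ j ∈ S, α * x j * (A i j * c) = (∑ j ∈ S, A i j * x j) * (α * c) := by
      rw [Finset.sum_mul]
      exact Finset.sum_congr rfl fun j _ => by ring
    rw [heq]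
    have hαc : α * c ≤ 0 := mul_nonpos_of_nonneg_of_nonpos hα0.le hc0
    have hfin : (1 - δ) * (α * c) = μ₀ * c := by rw [← hαμ]; ring
    calc (∑ j ∈ S, A i j * x j) * (α * c) ≤ (1 - δ) * (α * c) := by
          nlinarith [mul_nonneg (sub_nonneg.mpr hsmall) (neg_nonneg.mpr hαc)]
      _ = μ₀ * c := hfin
  -- Chernoff
  have hchern := measure_le_le_exp_mul_mgf (μ := P) (X := ∑ j ∈ S, X j) 1 ht0.le h_int
  have hnum : -t * 1 + μ₀ * c ≤ -δ ^ 2 / (2 * θ) := by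
    have hlogδ : Real.log μ₀ ≤ δ := by
      rw [Real.log_le_iff_le_exp hμ₀0]
      exact Real.quadratic_le_exp_of_nonneg hδ0.le
    have hμc : μ₀ * c = (1 - μ₀) / θ := by
      rw [hcdef, hexptθ]
      field_simp
    have hnegt : -t * 1 = Real.log μ₀ / θ := by
      rw [htdef]
      field_simp
    rw [hnegt, hμc, ← add_div, ← div_div]
    exact (div_le_div_iff_of_pos_right hθ0).mpr (by linarith)
  have hfinal : (P {ω | (∑ j ∈ S, X j) ω ≤ 1}).toReal ≤ Real.exp (-δ ^ 2 / (2 * θ)) := by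
    refine hchern.trans ?_
    calc Real.exp (-t * 1) * mgf (∑ j ∈ S, X j) P t
        ≤ Real.exp (-t * 1) * Real.exp (μ₀ * c) := by
          apply mul_le_mul_of_nonneg_left _ (Real.exp_pos _).le
          exact hprod.trans (Real.exp_le_exp.mpr hsum_le)
      _ = Real.exp (-t * 1 + μ₀ * c) := (Real.exp_add _ _).symm
      _ ≤ Real.exp (-δ ^ 2 / (2 * θ)) := Real.exp_le_exp.mpr hnum
  calc P {ω | ∑ j, A i j * (z ω j : ℝ) < 1}
      ≤ P {ω | (∑ j ∈ S, X j) ω ≤ 1} := measure_mono hsub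
    _ = ENNReal.ofReal ((P {ω | (∑ j ∈ S, X j) ω ≤ 1}).toReal) :=
        (ENNReal.ofReal_toReal (measure_ne_top _ _)).symm
    _ ≤ ENNReal.ofReal (Real.exp (-δ ^ 2 / (2 * θ))) := ENNReal.ofReal_le_ofReal hfinal
end

section
/- Let γ > 0 and let X_1, …, X_n be independent random variables with X_i ∈ [0,γ] almost surely for each i, let μ = E[∑_{i=1}^n X_i], and let β ∈ ℝ satisfy 0 < β < μ. Then P[∑_{i=1}^n X_i < β] ≤ exp((β − μ + β·ln(μ/β))/γ). -/
open MeasureTheory ProbabilityTheory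

/-- lower-tail Chernoff inequality for independent random
variables in `[0,γ]` (Lemma `unnormalized-chernoff`). -/
theorem stmt_19 (n : ℕ) (Ω : Type*) [MeasurableSpace Ω]
    (P : Measure Ω) [IsProbabilityMeasure P]
    (γ : ℝ) (hγ : 0 < γ)
    (X : Fin n → Ω → ℝ)
    (hXmeas : ∀ i, Measurable (X i))
    (hXind : iIndepFun X P)
    (hXbound : ∀ i, ∀ᵐ ω ∂P, X i ω ∈ Set.Icc 0 γ)
    (μ β : ℝ)
    (hμ : μ = ∫ ω, (∑ i, X i ω) ∂P)
    (hβ0 : 0 < β) (hβμ : β < μ) :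
    P {ω | ∑ i, X i ω < β} ≤
      ENNReal.ofReal (Real.exp ((β - μ + β * Real.log (μ / β)) / γ)) := by
  have hμ0 : 0 < μ := hβ0.trans hβμ
  have hratio : (1:ℝ) < μ / β := (one_lt_div hβ0).mpr hβμ
  have hlog : 0 < Real.log (μ / β) := Real.log_pos hratio
  set t : ℝ := -Real.log (μ / β) / γ with ht_def
  have ht : t ≤ 0 := by
    apply div_nonpos_of_nonpos_of_nonneg <;> [linarith; linarith]
  have htγ : t * γ = -Real.log (μ / β) := by
    rw [ht_def, div_mul_cancel₀ _ hγ.ne']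
  have hexp_tγ : Real.exp (t * γ) = β / μ := by
    rw [htγ, ← Real.log_inv, Real.exp_log]
    · rw [inv_div]
    · positivity
  set c : ℝ := (Real.exp (t * γ) - 1) / γ with hc_def
  -- integrability of X i
  have hXint : ∀ i, Integrable (X i) P := by
    intro i
    refine Integrable.mono' (integrable_const γ) (hXmeas i).aestronglyMeasurable ?_
    filter_upwards [hXbound i] with ω hω
    rw [Real.norm_eq_abs, abs_le]
    exact ⟨by linarith [hω.1], hω.2⟩
  -- integrability of exp(t * X i)
  have hexpint : ∀ i : Fin n, Integrable (fun ω => Real.exp (t * X i ω)) P := by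
    intro i
    refine Integrable.mono' (integrable_const 1) ((hXmeas i).const_mul t).exp.aestronglyMeasurable ?_
    filter_upwards [hXbound i] with ω hω
    rw [Real.norm_eq_abs, abs_of_pos (Real.exp_pos _)]
    rw [Real.exp_le_one_iff]
    exact mul_nonpos_of_nonpos_of_nonneg ht hω.1
  -- mgf bound per coordinate
  have hmgf : ∀ i : Fin n, mgf (X i) P t ≤ Real.exp (c * ∫ ω, X i ω ∂P) := by
    intro i
    have key : mgf (X i) P t ≤ ∫ ω, (1 + c * X i ω) ∂P := by
      unfold mgf
      refine integral_mono_ae (hexpint i) ((integrable_const 1).add ((hXint i).const_mul c)) ?_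
      filter_upwards [hXbound i] with ω hω
      -- convexity: exp(t x) ≤ 1 + (exp(tγ)-1) x / γ for x ∈ [0, γ]
      have hx0 := hω.1
      have hxγ := hω.2
      have ha : (0:ℝ) ≤ 1 - X i ω / γ := by
        rw [sub_nonneg]; exact div_le_one_of_le₀ hxγ hγ.le
      have hb : (0:ℝ) ≤ X i ω / γ := by positivity
      have h1 : (1:ℝ) - X i ω / γ + X i ω / γ = 1 := by ring
      have hconv := convexOn_exp.2 (Set.mem_univ (t * 0)) (Set.mem_univ (t * γ)) ha hb h1
      have harg : (1 - X i ω / γ) • (t * 0) + (X i ω / γ) • (t * γ) = t * X i ω := by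
        field_simp
        rw [smul_eq_mul, smul_eq_mul, mul_zero, mul_zero, zero_add, ← mul_assoc, div_mul_cancel₀ _ hγ.ne']
      rw [harg] at hconv
      refine hconv.trans (le_of_eq ?_)
      rw [smul_eq_mul, smul_eq_mul, mul_zero, Real.exp_zero, mul_one, hc_def]
      field_simp
      ring
    have key2 : ∫ ω, (1 + c * X i ω) ∂P = 1 + c * ∫ ω, X i ω ∂P := by
      rw [integral_add (integrable_const 1) ((hXint i).const_mul c), integral_const,
        probReal_univ, smul_eq_mul, mul_one, integral_const_mul]
    calc mgf (X i) P t ≤ 1 + c * ∫ ω, X i ω ∂P := by rw [← key2]; exact key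
      _ ≤ Real.exp (c * ∫ ω, X i ω ∂P) := by
          rw [add_comm]; exact Real.add_one_le_exp _
  -- Chernoff
  have hSexpint : Integrable (fun ω => Real.exp (t * (∑ i, X i) ω)) P := by
    simp only [Finset.sum_apply]
    refine Integrable.mono' (integrable_const 1)
      ((Finset.univ.measurable_sum fun i _ => hXmeas i).const_mul t).exp.aestronglyMeasurable ?_
    have hall : ∀ᵐ ω ∂P, ∀ i : Fin n, X i ω ∈ Set.Icc 0 γ := ae_all_iff.mpr hXbound
    filter_upwards [hall] with ω hω
    rw [Real.norm_eq_abs, abs_of_pos (Real.exp_pos _), Real.exp_le_one_iff]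
    exact mul_nonpos_of_nonpos_of_nonneg ht (Finset.sum_nonneg fun i _ => (hω i).1)
  have hcher := measure_le_le_exp_mul_mgf (μ := P) (X := ∑ i, X i) β ht hSexpint
  rw [hXind.mgf_sum hXmeas Finset.univ] at hcher
  have hprod : ∏ i, mgf (X i) P t ≤ Real.exp (c * μ) := by
    calc ∏ i, mgf (X i) P t ≤ ∏ i, Real.exp (c * ∫ ω, X i ω ∂P) :=
          Finset.prod_le_prod (fun i _ => mgf_nonneg) (fun i _ => hmgf i)
      _ = Real.exp (∑ i, c * ∫ ω, X i ω ∂P) := (Real.exp_sum _ _).symm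
      _ = Real.exp (c * μ) := by
          rw [← Finset.mul_sum, hμ]
          congr 2
          rw [← integral_finset_sum _ fun i _ => hXint i]
  have hfinal : Real.exp (-t * β) * (∏ i, mgf (X i) P t)
      ≤ Real.exp ((β - μ + β * Real.log (μ / β)) / γ) := by
    have : Real.exp (-t * β) * Real.exp (c * μ) =
        Real.exp ((β - μ + β * Real.log (μ / β)) / γ) := by
      rw [← Real.exp_add]
      congr 1
      rw [hc_def, hexp_tγ, ht_def]
      field_simp
      ring
    calc Real.exp (-t * β) * (∏ i, mgf (X i) P t)
        ≤ Real.exp (-t * β) * Real.exp (c * μ) := by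
          exact mul_le_mul_of_nonneg_left hprod (Real.exp_pos _).le
      _ = _ := this
  -- assemble
  have hsub : P {ω | ∑ i, X i ω < β} ≤ P {ω | (∑ i, X i) ω ≤ β} := by
    refine measure_mono fun ω hω => ?_
    simp only [Set.mem_setOf_eq, Finset.sum_apply] at *
    exact hω.le
  refine hsub.trans ?_
  have hne : P {ω | (∑ i, X i) ω ≤ β} ≠ ⊤ := measure_ne_top _ _
  rw [← ENNReal.ofReal_toReal hne]
  exact ENNReal.ofReal_le_ofReal (hcher.trans hfinal)
end
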